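/- Let κ be a set, let B ⊆ κ be countable, and let α₀ ∈ κ ∖ B. Then for ν-almost every ρ ∈ Ω, the set W_{α₀}(ρ) is dense in the topology on ω^{<ω} generated by τ₀ ∪ {U_α(ρ) : α ∈ B}; equivalently, U_{α₀}(ρ) contains no nonempty open set of that topology. -/

import Mathlib

open MeasureTheory
open scoped ENNReal

/-- The cone `[t] = {s : t ⊆ s}`. -/
def cone (t : List ℕ) : Set (List ℕ) := {s | t <+: s}

/-- The subbasis for the topology `τ₀`: all cones and all complements of cones. -/
def subbasis0 : Set (Set (List ℕ)) :=
  {C | ∃ t, C = cone t} ∪ {C | ∃ t, C = (cone t)ᶜ}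

/-- The topology `τ₀` on `ω^{<ω}`. -/
def tau0 : TopologicalSpace (List ℕ) := TopologicalSpace.generateFrom subbasis0

/-- `sFnP e α n ρ` is the finite sequence `t_n ⌢ ⟨ρ(α,t_n,0), …, ρ(α,t_n,n+1)⟩`. -/
def sFnP {κ : Type*} (e : ℕ → List ℕ) (α : κ) (n : ℕ) (ρ : κ × List ℕ × ℕ → ℕ) : List ℕ :=
  e n ++ List.ofFn fun i : Fin (n + 2) => ρ (α, e n, (i : ℕ))

/-- `WsetP e α ρ = {s : s_{α,t_n}(ρ) ⊆ s for some n}`. -/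
def WsetP {κ : Type*} (e : ℕ → List ℕ) (α : κ) (ρ : κ × List ℕ × ℕ → ℕ) : Set (List ℕ) :=
  {s | ∃ n, sFnP e α n ρ <+: s}

/-- `UsetP e α ρ = ω^{<ω} ∖ W_α(ρ)`. -/
def UsetP {κ : Type*} (e : ℕ → List ℕ) (α : κ) (ρ : κ × List ℕ × ℕ → ℕ) : Set (List ℕ) :=
  (WsetP e α ρ)ᶜ

section Aux
variable {κ : Type*}

lemma length_sFnP (e : ℕ → List ℕ) (α : κ) (n : ℕ) (ρ) :
    (sFnP e α n ρ).length = (e n).length + (n + 2) := by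
  simp [sFnP]

lemma sFnP_getElem (e : ℕ → List ℕ) (α : κ) (n : ℕ) (ρ) {j : ℕ} (hj : j < n + 2) :
    (sFnP e α n ρ)[(e n).length + j]'(by simp [sFnP]; omega) = ρ (α, e n, j) := by
  show (e n ++ List.ofFn fun i : Fin (n + 2) => ρ (α, e n, (i : ℕ)))[(e n).length + j]'(by simp; omega) = _
  rw [List.getElem_append_right (Nat.le_add_right _ _)]
  simp only [Nat.add_sub_cancel_left, List.getElem_ofFn]

lemma prefix_snoc_of_prefix {w q : List ℕ} (h : w <+: q) (hlt : w.length < q.length) :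
    w ++ [q[w.length]] <+: q := by
  have h1 : q.take w.length = w := (List.prefix_iff_eq_take.1 h).symm
  have h2 : q.take (w.length + 1) = w ++ [q[w.length]] := by
    rw [List.take_succ, h1]
    simp [List.getElem?_eq_getElem hlt]
  rw [← h2]
  exact List.take_prefix _ _

/-- The good event. -/
def GoodP (e : ℕ → List ℕ) (d : List ℕ → ℕ) (α₀ : κ) (s : List ℕ)
    (T : Finset (List ℕ)) (L : Finset κ) (ρ : κ × List ℕ × ℕ → ℕ) : Prop :=
  ∃ k : ℕ,
    (s ++ [k] ∉ T ∧ ∀ α ∈ L, ∀ m, sFnP e α m ρ ≠ s ++ [k]) ∧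
    ((∀ t' ∈ T, ¬ (s ++ [k] ++ [ρ (α₀, s ++ [k], 0)] <+: t')) ∧
      ∀ α ∈ L, ∀ m, e m <+: s → ¬ (s ++ [k] ++ [ρ (α₀, s ++ [k], 0)] <+: sFnP e α m ρ)) ∧
    (∀ α ∈ L, ∀ m, s ++ [k] <+: e m → ¬ (sFnP e α m ρ <+: sFnP e α₀ (d (s ++ [k])) ρ))

lemma core {e : ℕ → List ℕ} {d : List ℕ → ℕ} (hd : ∀ t, e (d t) = t)
    {α₀ : κ} {s : List ℕ} {T : Finset (List ℕ)} {L : Finset κ}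
    {ρ : κ × List ℕ × ℕ → ℕ}
    (hG : GoodP e d α₀ s T L ρ)
    (ha1 : ∀ t' ∈ T, ¬ t' <+: s)
    (ha2 : ∀ α ∈ L, s ∈ UsetP e α ρ) :
    ∃ s', s <+: s' ∧ s' ∈ WsetP e α₀ ρ ∧ (∀ t' ∈ T, ¬ t' <+: s') ∧
      ∀ α ∈ L, s' ∈ UsetP e α ρ := by
  obtain ⟨k, hP1, hP2, hP3⟩ := hG
  set x := ρ (α₀, s ++ [k], 0) with hxdef
  set s' := sFnP e α₀ (d (s ++ [k])) ρ with hs'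
  have hsk : s ++ [k] <+: s' := by
    rw [hs', sFnP, hd]; exact List.prefix_append _ _
  have hlen' : s'.length = (s.length + 1) + (d (s ++ [k]) + 2) := by
    rw [hs', length_sFnP, hd]; simp
  have hss' : s <+: s' := (List.prefix_append s [k]).trans hsk
  have hx : s ++ [k] ++ [x] <+: s' := by
    rw [hs', sFnP, hd]
    refine ⟨List.ofFn (fun i : Fin (d (s ++ [k]) + 1) => ρ (α₀, s ++ [k], (i : ℕ) + 1)), ?_⟩
    rw [List.append_assoc, List.singleton_append]
    congr 1
    conv_rhs => rw [List.ofFn_succ]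
    rfl
  have hUs : ∀ α ∈ L, ∀ m, ¬ sFnP e α m ρ <+: s := by
    intro α hα m hpre
    exact (ha2 α hα) ⟨m, hpre⟩
  refine ⟨s', hss', ⟨d (s ++ [k]), List.prefix_rfl⟩, ?_, ?_⟩
  · intro t' ht' hpre
    rcases (by omega : t'.length ≤ s.length ∨ t'.length = s.length + 1 ∨ s.length + 2 ≤ t'.length) with h | h | h
    · exact ha1 t' ht' (List.prefix_of_prefix_length_le hpre hss' h)
    · have h2 : s ++ [k] <+: t' := List.prefix_of_prefix_length_le hsk hpre (by simp [h])
      have : s ++ [k] = t' := h2.eq_of_length_le (by simp [h])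
      exact hP1.1 (this ▸ ht')
    · exact hP2.1 t' ht' (List.prefix_of_prefix_length_le hx hpre (by simp; omega))
  · intro α hα
    intro hmem
    obtain ⟨m, hpre⟩ := hmem
    have hq : (sFnP e α m ρ).length = (e m).length + (m + 2) := length_sFnP _ _ _ _
    have hem : e m <+: s' := (List.prefix_append _ _).trans hpre
    rcases (by omega : (sFnP e α m ρ).length ≤ s.length ∨ (sFnP e α m ρ).length = s.length + 1 ∨ s.length + 2 ≤ (sFnP e α m ρ).length) with h | h | h
    · exact hUs α hα m (List.prefix_of_prefix_length_le hpre hss' h)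
    · have h2 : s ++ [k] <+: sFnP e α m ρ := List.prefix_of_prefix_length_le hsk hpre (by simp [h])
      have : s ++ [k] = sFnP e α m ρ := h2.eq_of_length_le (by simp [h])
      exact hP1.2 α hα m this.symm
    · rcases List.prefix_or_prefix_of_prefix hem hsk with h' | h'
      · by_cases hc : (e m).length ≤ s.length
        · have hems : e m <+: s := List.prefix_of_prefix_length_le hem hss' hc
          have : s ++ [k] ++ [x] <+: sFnP e α m ρ :=
            List.prefix_of_prefix_length_le hx hpre (by simp; omega)
          exact hP2.2 α hα m hems this
        · have hlen : (s ++ [k]).length ≤ (e m).length := by simp; omega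
          have : e m = s ++ [k] := h'.eq_of_length_le hlen
          exact hP3 α hα m (this ▸ List.prefix_rfl) hpre
      · exact hP3 α hα m h' hpre

end Aux
section Meas
variable {κ : Type*} (ν : Measure (κ × List ℕ × ℕ → ℕ))

lemma meas_shape (G : Finset (κ × List ℕ × ℕ)) (g : κ × List ℕ × ℕ → ℕ)
    (S : Finset ℕ) (a : ℕ → κ × List ℕ × ℕ) (Lset : Finset ℕ) :
    MeasurableSet {ρ : κ × List ℕ × ℕ → ℕ |
      (∀ c ∈ G, ρ c = g c) ∧ ∀ k ∈ S, ρ (a k) ∈ Lset} := by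
  have h : {ρ : κ × List ℕ × ℕ → ℕ | (∀ c ∈ G, ρ c = g c) ∧ ∀ k ∈ S, ρ (a k) ∈ Lset}
      = (⋂ c ∈ (G : Set (κ × List ℕ × ℕ)), (fun ρ : κ × List ℕ × ℕ → ℕ => ρ c) ⁻¹' {g c}) ∩
        ⋂ k ∈ (S : Set ℕ), (fun ρ : κ × List ℕ × ℕ → ℕ => ρ (a k)) ⁻¹' {m | m ∈ Lset} := by
    ext ρ; simp
  rw [h]
  refine (MeasurableSet.biInter G.countable_toSet fun c _ =>
    (measurable_pi_apply c) (measurableSet_singleton _)).inter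
    (MeasurableSet.biInter S.countable_toSet fun k _ =>
      (measurable_pi_apply (a k)) ?_)
  exact .of_discrete

lemma meas_shape2 (G : Finset (κ × List ℕ × ℕ)) (g : κ × List ℕ × ℕ → ℕ)
    (j : ℕ) (a b : ℕ → κ × List ℕ × ℕ) :
    MeasurableSet {ρ : κ × List ℕ × ℕ → ℕ |
      (∀ c ∈ G, ρ c = g c) ∧ ∀ i < j, ρ (a i) = ρ (b i)} := by
  have h : {ρ : κ × List ℕ × ℕ → ℕ | (∀ c ∈ G, ρ c = g c) ∧ ∀ i < j, ρ (a i) = ρ (b i)}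
      = (⋂ c ∈ (G : Set (κ × List ℕ × ℕ)), (fun ρ : κ × List ℕ × ℕ → ℕ => ρ c) ⁻¹' {g c}) ∩
        ⋂ i : ℕ, ⋂ (_ : i < j), {ρ : κ × List ℕ × ℕ → ℕ | ρ (a i) = ρ (b i)} := by
    ext ρ; simp
  rw [h]
  refine (MeasurableSet.biInter G.countable_toSet fun c _ =>
    (measurable_pi_apply c) (measurableSet_singleton _)).inter
    (MeasurableSet.iInter fun i => MeasurableSet.iInter fun _ =>
      measurableSet_eq_fun (measurable_pi_apply (a i)) (measurable_pi_apply (b i)))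

lemma key2 (hν : ∀ (F : Finset (κ × List ℕ × ℕ)) (g : κ × List ℕ × ℕ → ℕ),
      ν {ρ | ∀ c ∈ F, ρ c = g c} = ∏ c ∈ F, ((2 : ℝ≥0∞)⁻¹) ^ (g c + 1))
    (a : ℕ → κ × List ℕ × ℕ) (Lset : Finset ℕ) (S : Finset ℕ) :
    ∀ (G : Finset (κ × List ℕ × ℕ)) (g : κ × List ℕ × ℕ → ℕ),
      Set.InjOn a ↑S → (∀ k ∈ S, a k ∉ G) →
      ν {ρ | (∀ c ∈ G, ρ c = g c) ∧ ∀ k ∈ S, ρ (a k) ∈ Lset}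
        = (∏ c ∈ G, ((2 : ℝ≥0∞)⁻¹) ^ (g c + 1)) *
          (∑ m ∈ Lset, ((2 : ℝ≥0∞)⁻¹) ^ (m + 1)) ^ S.card := by
  classical
  induction S using Finset.induction_on with
  | empty =>
    intro G g _ _
    simp only [Finset.notMem_empty, false_implies, implies_true, and_true,
      Finset.card_empty, pow_zero, mul_one]
    exact hν G g
  | @insert j S hj ih =>
    intro G g hinj hdis
    have hajG : a j ∉ G := hdis j (Finset.mem_insert_self _ _)
    have hakj : ∀ k ∈ S, a k ≠ a j := by
      intro k hk heq
      have hkj : k = j := hinj (Finset.mem_coe.2 (Finset.mem_insert_of_mem hk))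
        (Finset.mem_coe.2 (Finset.mem_insert_self _ _)) heq
      exact hj (hkj ▸ hk)
    set D : ℕ → Set (κ × List ℕ × ℕ → ℕ) := fun m =>
      if m ∈ Lset then
        {ρ : κ × List ℕ × ℕ → ℕ |
          (∀ c ∈ insert (a j) G, ρ c = Function.update g (a j) m c) ∧
          ∀ k ∈ S, ρ (a k) ∈ Lset}
      else ∅ with hD
    have hset : {ρ : κ × List ℕ × ℕ → ℕ |
        (∀ c ∈ G, ρ c = g c) ∧ ∀ k ∈ insert j S, ρ (a k) ∈ Lset} = ⋃ m : ℕ, D m := by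
      ext ρ
      simp only [Set.mem_setOf_eq, Set.mem_iUnion, hD]
      constructor
      · rintro ⟨hG, hS⟩
        refine ⟨ρ (a j), ?_⟩
        rw [if_pos (hS j (Finset.mem_insert_self _ _))]
        refine ⟨fun c hc => ?_, fun k hk => hS k (Finset.mem_insert_of_mem hk)⟩
        rcases Finset.mem_insert.1 hc with rfl | hcG
        · rw [Function.update_self]
        · rw [Function.update_of_ne (show c ≠ a j from fun h => hajG (h ▸ hcG)), hG c hcG]
      · rintro ⟨m, hm⟩
        by_cases hmL : m ∈ Lset
        · rw [if_pos hmL] at hm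
          obtain ⟨hG', hS'⟩ := hm
          have haj : ρ (a j) = m := by
            have := hG' (a j) (Finset.mem_insert_self _ _)
            rwa [Function.update_self] at this
          refine ⟨fun c hc => ?_, fun k hk => ?_⟩
          · have := hG' c (Finset.mem_insert_of_mem hc)
            rwa [Function.update_of_ne (show c ≠ a j from fun h => hajG (h ▸ hc))] at this
          · rcases Finset.mem_insert.1 hk with rfl | hk'
            · rw [haj]; exact hmL
            · exact hS' k hk'
        · rw [if_neg hmL] at hm
          exact absurd hm (Set.notMem_empty ρ)
    have hdisj : Pairwise (Function.onFun Disjoint D) := by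
      intro m m' hne
      simp only [Function.onFun, hD]
      by_cases h1 : m ∈ Lset
      · by_cases h2 : m' ∈ Lset
        · rw [if_pos h1, if_pos h2, Set.disjoint_left]
          intro ρ hρ hρ'
          have e1 := hρ.1 (a j) (Finset.mem_insert_self _ _)
          have e2 := hρ'.1 (a j) (Finset.mem_insert_self _ _)
          rw [Function.update_self] at e1 e2
          exact hne (e1 ▸ e2)
        · rw [if_neg h2]; exact Set.disjoint_empty _
      · rw [if_neg h1]; exact Set.empty_disjoint _
    have hmeas : ∀ m : ℕ, MeasurableSet (D m) := by
      intro m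
      simp only [hD]
      split_ifs
      · exact meas_shape _ _ _ _ _
      · exact MeasurableSet.empty
    rw [hset, measure_iUnion hdisj hmeas]
    have hval : ∀ m : ℕ, ν (D m) =
        if m ∈ Lset then ((2 : ℝ≥0∞)⁻¹) ^ (m + 1) *
          ((∏ c ∈ G, ((2 : ℝ≥0∞)⁻¹) ^ (g c + 1)) *
            (∑ m' ∈ Lset, ((2 : ℝ≥0∞)⁻¹) ^ (m' + 1)) ^ S.card) else 0 := by
      intro m
      simp only [hD]
      split_ifs with hmL
      · rw [ih (insert (a j) G) (Function.update g (a j) m)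
          (hinj.mono (by simp [Finset.subset_insert]))
          (fun k hk => by
            simp only [Finset.mem_insert]
            push_neg
            exact ⟨hakj k hk, hdis k (Finset.mem_insert_of_mem hk)⟩)]
        rw [Finset.prod_insert hajG, Function.update_self]
        have : ∏ c ∈ G, ((2 : ℝ≥0∞)⁻¹) ^ (Function.update g (a j) m c + 1)
            = ∏ c ∈ G, ((2 : ℝ≥0∞)⁻¹) ^ (g c + 1) := by
          refine Finset.prod_congr rfl fun c hc => ?_
          rw [Function.update_of_ne (show c ≠ a j from fun h => hajG (h ▸ hc))]
        rw [this, mul_assoc]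
      · exact measure_empty
    calc ∑' m : ℕ, ν (D m)
        = ∑' m : ℕ, (if m ∈ Lset then ((2 : ℝ≥0∞)⁻¹) ^ (m + 1) *
            ((∏ c ∈ G, ((2 : ℝ≥0∞)⁻¹) ^ (g c + 1)) *
              (∑ m' ∈ Lset, ((2 : ℝ≥0∞)⁻¹) ^ (m' + 1)) ^ S.card) else 0) := tsum_congr hval
      _ = ∑ m ∈ Lset, (if m ∈ Lset then ((2 : ℝ≥0∞)⁻¹) ^ (m + 1) *
            ((∏ c ∈ G, ((2 : ℝ≥0∞)⁻¹) ^ (g c + 1)) *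
              (∑ m' ∈ Lset, ((2 : ℝ≥0∞)⁻¹) ^ (m' + 1)) ^ S.card) else 0) :=
          tsum_eq_sum (fun m hm => if_neg hm)
      _ = ∑ m ∈ Lset, ((2 : ℝ≥0∞)⁻¹) ^ (m + 1) *
            ((∏ c ∈ G, ((2 : ℝ≥0∞)⁻¹) ^ (g c + 1)) *
              (∑ m' ∈ Lset, ((2 : ℝ≥0∞)⁻¹) ^ (m' + 1)) ^ S.card) :=
          Finset.sum_congr rfl (fun m hm => if_pos hm)
      _ = (∑ m ∈ Lset, ((2 : ℝ≥0∞)⁻¹) ^ (m + 1)) *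
          ((∏ c ∈ G, ((2 : ℝ≥0∞)⁻¹) ^ (g c + 1)) *
            (∑ m' ∈ Lset, ((2 : ℝ≥0∞)⁻¹) ^ (m' + 1)) ^ S.card) := by
          rw [← Finset.sum_mul]
      _ = (∏ c ∈ G, ((2 : ℝ≥0∞)⁻¹) ^ (g c + 1)) *
          (∑ m ∈ Lset, ((2 : ℝ≥0∞)⁻¹) ^ (m + 1)) ^ (insert j S).card := by
          rw [Finset.card_insert_of_notMem hj, pow_succ]
          ring

end Meas
section Meas2
variable {κ : Type*} (ν : Measure (κ × List ℕ × ℕ → ℕ))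

lemma two_inv_sq : ((2 : ℝ≥0∞)⁻¹) * ((2 : ℝ≥0∞)⁻¹) = (4 : ℝ≥0∞)⁻¹ := by
  rw [← ENNReal.mul_inv (by norm_num) (by norm_num)]
  norm_num

lemma tsum_sq_geom :
    ∑' m : ℕ, ((2 : ℝ≥0∞)⁻¹) ^ (m + 1) * ((2 : ℝ≥0∞)⁻¹) ^ (m + 1) = (3 : ℝ≥0∞)⁻¹ := by
  have h4 : ∀ m : ℕ, ((2 : ℝ≥0∞)⁻¹) ^ (m + 1) * ((2 : ℝ≥0∞)⁻¹) ^ (m + 1)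
      = (4 : ℝ≥0∞)⁻¹ * ((4 : ℝ≥0∞)⁻¹) ^ m := by
    intro m
    rw [← mul_pow, two_inv_sq, pow_succ]
    ring
  rw [tsum_congr h4, ENNReal.tsum_mul_left, ENNReal.tsum_geometric]
  have hsub : (1 : ℝ≥0∞) - (4 : ℝ≥0∞)⁻¹ = 3 * (4 : ℝ≥0∞)⁻¹ := by
    refine ENNReal.sub_eq_of_eq_add (by norm_num) ?_
    have h44 : (4 : ℝ≥0∞) * (4 : ℝ≥0∞)⁻¹ = 1 := ENNReal.mul_inv_cancel (by norm_num) (by norm_num)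
    calc (1 : ℝ≥0∞) = 4 * (4 : ℝ≥0∞)⁻¹ := h44.symm
      _ = 3 * (4 : ℝ≥0∞)⁻¹ + (4 : ℝ≥0∞)⁻¹ := by
          rw [show (4 : ℝ≥0∞) = 3 + 1 by norm_num, add_mul, one_mul]
  rw [hsub, ENNReal.mul_inv (Or.inl (by norm_num)) (Or.inl (by norm_num)), inv_inv,
    ← mul_assoc, mul_comm ((4 : ℝ≥0∞)⁻¹) ((3 : ℝ≥0∞)⁻¹), mul_assoc,
    ENNReal.inv_mul_cancel (by norm_num) (by norm_num), mul_one]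

lemma sum_range_half (n : ℕ) :
    ∑ m ∈ Finset.range n, ((2 : ℝ≥0∞)⁻¹) ^ (m + 1) + ((2 : ℝ≥0∞)⁻¹) ^ n = 1 := by
  induction n with
  | zero => simp
  | succ n ih =>
    rw [Finset.sum_range_succ, add_assoc]
    have h2 : ((2 : ℝ≥0∞)⁻¹) ^ (n + 1) + ((2 : ℝ≥0∞)⁻¹) ^ (n + 1) = ((2 : ℝ≥0∞)⁻¹) ^ n := by
      rw [pow_succ, ← mul_add]
      have : (2 : ℝ≥0∞)⁻¹ + (2 : ℝ≥0∞)⁻¹ = 1 := by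
        rw [← two_mul]
        exact ENNReal.mul_inv_cancel (by norm_num) (by norm_num)
      rw [this, mul_one]
    rw [h2, ih]

lemma psum_lt_one (Lset : Finset ℕ) :
    (∑ m ∈ Lset, ((2 : ℝ≥0∞)⁻¹) ^ (m + 1)) < 1 := by
  set M := Lset.sup id with hM
  have hsub : Lset ⊆ Finset.range (M + 1) := fun m hm =>
    Finset.mem_range.2 (Nat.lt_succ_of_le (Finset.le_sup (f := id) hm))
  have h1 : (∑ m ∈ Lset, ((2 : ℝ≥0∞)⁻¹) ^ (m + 1))
      ≤ ∑ m ∈ Finset.range (M + 1), ((2 : ℝ≥0∞)⁻¹) ^ (m + 1) :=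
    Finset.sum_le_sum_of_subset hsub
  have h2 := sum_range_half (M + 1)
  have h3 : (∑ m ∈ Finset.range (M + 1), ((2 : ℝ≥0∞)⁻¹) ^ (m + 1)) < 1 := by
    rw [← h2]
    refine ENNReal.lt_add_right ?_ ?_
    · intro h
      rw [h] at h2
      simp at h2
    · exact pow_ne_zero _ (by norm_num)
  exact lt_of_le_of_lt h1 h3

lemma key3 (hν : ∀ (F : Finset (κ × List ℕ × ℕ)) (g : κ × List ℕ × ℕ → ℕ),
      ν {ρ | ∀ c ∈ F, ρ c = g c} = ∏ c ∈ F, ((2 : ℝ≥0∞)⁻¹) ^ (g c + 1))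
    (a b : ℕ → κ × List ℕ × ℕ) :
    ∀ (j : ℕ) (G : Finset (κ × List ℕ × ℕ)) (g : κ × List ℕ × ℕ → ℕ),
      (∀ i < j, a i ∉ G) → (∀ i < j, b i ∉ G) →
      (∀ i < j, ∀ i' < j, a i ≠ b i') →
      (∀ i < j, ∀ i' < j, i ≠ i' → a i ≠ a i') →
      (∀ i < j, ∀ i' < j, i ≠ i' → b i ≠ b i') →
      ν {ρ | (∀ c ∈ G, ρ c = g c) ∧ ∀ i < j, ρ (a i) = ρ (b i)}
        = (∏ c ∈ G, ((2 : ℝ≥0∞)⁻¹) ^ (g c + 1)) * ((3 : ℝ≥0∞)⁻¹) ^ j := by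
  classical
  intro j
  induction j with
  | zero =>
    intro G g _ _ _ _ _
    simp only [Nat.not_lt_zero, false_implies, implies_true, and_true, pow_zero, mul_one]
    exact hν G g
  | succ j ih =>
    intro G g haG hbG hab haa hbb
    have hjj : j < j + 1 := Nat.lt_succ_self j
    have hajbj : a j ≠ b j := hab j hjj j hjj
    have hajG : a j ∉ G := haG j hjj
    have hbjG : b j ∉ G := hbG j hjj
    have hajin : a j ∉ insert (b j) G := by
      simp only [Finset.mem_insert]
      push_neg
      exact ⟨hajbj, hajG⟩
    set D : ℕ → Set (κ × List ℕ × ℕ → ℕ) := fun m =>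
      {ρ : κ × List ℕ × ℕ → ℕ |
        (∀ c ∈ insert (a j) (insert (b j) G),
          ρ c = Function.update (Function.update g (b j) m) (a j) m c) ∧
        ∀ i < j, ρ (a i) = ρ (b i)} with hD
    have hgc : ∀ m : ℕ, ∀ c ∈ G,
        Function.update (Function.update g (b j) m) (a j) m c = g c := by
      intro m c hc
      rw [Function.update_of_ne (show c ≠ a j from fun h => hajG (h ▸ hc)),
        Function.update_of_ne (show c ≠ b j from fun h => hbjG (h ▸ hc))]
    have hset : {ρ : κ × List ℕ × ℕ → ℕ |
        (∀ c ∈ G, ρ c = g c) ∧ ∀ i < j + 1, ρ (a i) = ρ (b i)} = ⋃ m : ℕ, D m := by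
      ext ρ
      simp only [Set.mem_setOf_eq, Set.mem_iUnion, hD]
      constructor
      · rintro ⟨hG, hM⟩
        refine ⟨ρ (a j), fun c hc => ?_, fun i hi => hM i (Nat.lt_succ_of_lt hi)⟩
        rcases Finset.mem_insert.1 hc with rfl | hc'
        · rw [Function.update_self]
        · rcases Finset.mem_insert.1 hc' with rfl | hc''
          · rw [Function.update_of_ne (Ne.symm hajbj), Function.update_self]
            exact (hM j hjj).symm
          · rw [hgc _ c hc'']
            exact hG c hc''
      · rintro ⟨m, hG', hM⟩
        have haj : ρ (a j) = m := by
          have := hG' (a j) (Finset.mem_insert_self _ _)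
          rwa [Function.update_self] at this
        have hbj : ρ (b j) = m := by
          have := hG' (b j) (Finset.mem_insert_of_mem (Finset.mem_insert_self _ _))
          rwa [Function.update_of_ne (Ne.symm hajbj), Function.update_self] at this
        refine ⟨fun c hc => ?_, fun i hi => ?_⟩
        · have := hG' c (Finset.mem_insert_of_mem (Finset.mem_insert_of_mem hc))
          rwa [hgc _ c hc] at this
        · rcases Nat.lt_succ_iff_lt_or_eq.1 hi with hi' | rfl
          · exact hM i hi'
          · rw [haj, hbj]
    have hdisj : Pairwise (Function.onFun Disjoint D) := by
      intro m m' hne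
      simp only [Function.onFun, hD, Set.disjoint_left]
      intro ρ hρ hρ'
      have e1 := hρ.1 (a j) (Finset.mem_insert_self _ _)
      have e2 := hρ'.1 (a j) (Finset.mem_insert_self _ _)
      rw [Function.update_self] at e1 e2
      exact hne (e1 ▸ e2)
    have hmeas : ∀ m : ℕ, MeasurableSet (D m) := fun m => meas_shape2 _ _ _ _ _
    have hval : ∀ m : ℕ, ν (D m) =
        (((2 : ℝ≥0∞)⁻¹) ^ (m + 1) * ((2 : ℝ≥0∞)⁻¹) ^ (m + 1)) *
          ((∏ c ∈ G, ((2 : ℝ≥0∞)⁻¹) ^ (g c + 1)) * ((3 : ℝ≥0∞)⁻¹) ^ j) := by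
      intro m
      rw [hD]
      rw [ih (insert (a j) (insert (b j) G)) (Function.update (Function.update g (b j) m) (a j) m)
        (fun i hi => by
          simp only [Finset.mem_insert]
          push_neg
          exact ⟨haa i (Nat.lt_succ_of_lt hi) j hjj (Nat.ne_of_lt hi),
            hab i (Nat.lt_succ_of_lt hi) j hjj, haG i (Nat.lt_succ_of_lt hi)⟩)
        (fun i hi => by
          simp only [Finset.mem_insert]
          push_neg
          refine ⟨?_, hbb i (Nat.lt_succ_of_lt hi) j hjj (Nat.ne_of_lt hi),
            hbG i (Nat.lt_succ_of_lt hi)⟩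
          intro h
          exact hab j hjj i (Nat.lt_succ_of_lt hi) h.symm)
        (fun i hi i' hi' => hab i (Nat.lt_succ_of_lt hi) i' (Nat.lt_succ_of_lt hi'))
        (fun i hi i' hi' => haa i (Nat.lt_succ_of_lt hi) i' (Nat.lt_succ_of_lt hi'))
        (fun i hi i' hi' => hbb i (Nat.lt_succ_of_lt hi) i' (Nat.lt_succ_of_lt hi'))]
      rw [Finset.prod_insert hajin, Finset.prod_insert hbjG]
      rw [Function.update_self, Function.update_of_ne (Ne.symm hajbj), Function.update_self]
      rw [Finset.prod_congr rfl (fun c hc => by rw [hgc m c hc])]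
      ring
    rw [hset, measure_iUnion hdisj hmeas, tsum_congr hval, ENNReal.tsum_mul_right,
      tsum_sq_geom, pow_succ]
    ring

end Meas2
section Null
variable {κ : Type*}

lemma sFnP_getElem' (e : ℕ → List ℕ) (α : κ) (n : ℕ) (ρ) {i : ℕ}
    (h1 : (e n).length ≤ i) (h2 : i < (e n).length + (n + 2)) :
    (sFnP e α n ρ)[i]'(by rw [length_sFnP]; omega) = ρ (α, e n, i - (e n).length) := by
  show (e n ++ List.ofFn fun i : Fin (n + 2) => ρ (α, e n, (i : ℕ)))[i]'(by simp; omega) = _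
  rw [List.getElem_append_right h1]
  simp only [List.getElem_ofFn]

lemma snoc_prefix_getElem {w q : List ℕ} {x : ℕ} {i : ℕ} (h : w ++ [x] <+: q)
    (hi : i = w.length) (hq : i < q.length) : q[i]'hq = x := by
  subst hi
  have h2 := List.IsPrefix.getElem h (i := w.length) (by simp)
  rw [← h2, List.getElem_append_right (le_refl _)]
  simp

lemma prefix_getD {s u : List ℕ} {k : ℕ} (h : s ++ [k] <+: u) :
    u.getD s.length 0 = k := by
  have hlt : s.length < u.length := lt_of_lt_of_le (by simp) h.length_le
  rw [List.getD_eq_getElem _ _ hlt]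
  exact snoc_prefix_getElem h rfl hlt

/-- indices of the prefixes of `s`. -/
def MsF (d : List ℕ → ℕ) (s : List ℕ) : Finset ℕ :=
  (Finset.range (s.length + 1)).image (fun i => d (s.take i))

lemma mem_MsF {e : ℕ → List ℕ} {d : List ℕ → ℕ} (hd : ∀ t, e (d t) = t)
    (hinj : Function.Injective e) {s : List ℕ} {m : ℕ} :
    m ∈ MsF d s ↔ e m <+: s := by
  constructor
  · intro hm
    obtain ⟨i, _, rfl⟩ := Finset.mem_image.1 hm
    rw [hd]
    exact List.take_prefix _ _
  · intro h
    have h1 : e m = s.take (e m).length := List.prefix_iff_eq_take.1 h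
    have h2 : d (e m) = m := hinj (by rw [hd])
    refine Finset.mem_image.2 ⟨(e m).length, Finset.mem_range.2 ?_, ?_⟩
    · exact Nat.lt_succ_of_le h.length_le
    · rw [← h1, h2]
  
def InvK (e : ℕ → List ℕ) (d : List ℕ → ℕ) (s : List ℕ) (T : Finset (List ℕ))
    (L : Finset κ) (ρ : κ × List ℕ × ℕ → ℕ) : Finset ℕ :=
  T.image (fun t' => t'.getD s.length 0) ∪
    (L ×ˢ MsF d s).image (fun p => ρ (p.1, e p.2, p.2 + 1))

def BadLF (e : ℕ → List ℕ) (d : List ℕ → ℕ) (s : List ℕ) (T : Finset (List ℕ))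
    (L : Finset κ) (ρ : κ × List ℕ × ℕ → ℕ) : Finset ℕ :=
  T.image (fun t' => t'.getD (s.length + 1) 0) ∪
    (L ×ˢ MsF d s).image (fun p => ρ (p.1, e p.2, s.length + 1 - (e p.2).length))

def JKF (e : ℕ → List ℕ) (s : List ℕ) (K : ℕ) : Finset ℕ :=
  (Finset.range K).image (fun m => (e m).getD s.length 0)

def ZevS (e : ℕ → List ℕ) (α₀ : κ) (s : List ℕ) (I Bset : Finset ℕ) (K : ℕ) :
    Set (κ × List ℕ × ℕ → ℕ) :=
  {ρ | ∀ k : ℕ, k ∉ JKF e s K → k ∉ I → ρ (α₀, s ++ [k], 0) ∈ Bset}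

def N1S (e : ℕ → List ℕ) (d : List ℕ → ℕ) (α₀ : κ) (s : List ℕ) (L : Finset κ) :
    Set (κ × List ℕ × ℕ → ℕ) :=
  {ρ | ∀ K : ℕ, ∃ α ∈ L, ∃ m, K ≤ m ∧ ∃ k, s ++ [k] <+: e m ∧
    sFnP e α m ρ <+: sFnP e α₀ (d (s ++ [k])) ρ}

/-- membership in `InvK` from a failure of P1. -/
lemma mem_InvK {e : ℕ → List ℕ} {d : List ℕ → ℕ} (hd : ∀ t, e (d t) = t)
    (hinj : Function.Injective e) {s : List ℕ} {T : Finset (List ℕ)} {L : Finset κ}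
    {ρ : κ × List ℕ × ℕ → ℕ} {k : ℕ}
    (h : s ++ [k] ∈ T ∨ ∃ α ∈ L, ∃ m, sFnP e α m ρ = s ++ [k]) :
    k ∈ InvK e d s T L ρ := by
  rcases h with h | ⟨α, hα, m, hm⟩
  · exact Finset.mem_union_left _ (Finset.mem_image.2 ⟨s ++ [k], h, prefix_getD List.prefix_rfl⟩)
  · refine Finset.mem_union_right _ (Finset.mem_image.2 ⟨(α, m), ?_, ?_⟩)
    · refine Finset.mem_product.2 ⟨hα, ?_⟩
      show m ∈ MsF d s
      refine (mem_MsF hd hinj).2 ?_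
      have hlen : (e m).length + (m + 2) = s.length + 1 := by
        rw [← length_sFnP e α m ρ, hm]; simp
      have h1 : e m <+: s ++ [k] := hm ▸ List.prefix_append _ _
      exact List.prefix_of_prefix_length_le h1 (List.prefix_append s [k]) (by omega)
    · have hlen : (e m).length + (m + 2) = s.length + 1 := by
        rw [← length_sFnP e α m ρ, hm]; simp
      have h1 : (sFnP e α m ρ)[(e m).length + (m + 1)]'(by rw [length_sFnP]; omega)
          = ρ (α, e m, (e m).length + (m + 1) - (e m).length) :=
        sFnP_getElem' e α m ρ (Nat.le_add_right _ _) (by omega)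
      have h2 : (sFnP e α m ρ)[(e m).length + (m + 1)]'(by rw [length_sFnP]; omega) = k := by
        refine snoc_prefix_getElem (w := s) (x := k) (q := sFnP e α m ρ) ?_ (by omega) _
        exact hm ▸ List.prefix_rfl
      simp only [Nat.add_sub_cancel_left] at h1
      show ρ (α, e m, m + 1) = k
      rw [← h1, h2]

/-- membership in `BadLF` from a failure of P2. -/
lemma mem_BadLF {e : ℕ → List ℕ} {d : List ℕ → ℕ} (hd : ∀ t, e (d t) = t)
    (hinj : Function.Injective e) {s : List ℕ} {T : Finset (List ℕ)} {L : Finset κ}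
    {ρ : κ × List ℕ × ℕ → ℕ} {k x : ℕ}
    (h : (∃ t' ∈ T, s ++ [k] ++ [x] <+: t') ∨
      ∃ α ∈ L, ∃ m, e m <+: s ∧ s ++ [k] ++ [x] <+: sFnP e α m ρ) :
    x ∈ BadLF e d s T L ρ := by
  rcases h with ⟨t', ht', hpre⟩ | ⟨α, hα, m, hem, hpre⟩
  · refine Finset.mem_union_left _ (Finset.mem_image.2 ⟨t', ht', ?_⟩)
    have hlt : s.length + 1 < t'.length := by
      have := hpre.length_le; simp at this; omega
    rw [List.getD_eq_getElem _ _ hlt]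
    exact snoc_prefix_getElem hpre (by simp) hlt
  · refine Finset.mem_union_right _ (Finset.mem_image.2 ⟨(α, m), ?_, ?_⟩)
    · refine Finset.mem_product.2 ⟨hα, ?_⟩
      show m ∈ MsF d s
      exact (mem_MsF hd hinj).2 hem
    · have hle : (e m).length ≤ s.length := hem.length_le
      have hql : s.length + 2 ≤ (e m).length + (m + 2) := by
        have := hpre.length_le; rw [length_sFnP] at this; simp at this; omega
      have h1 : (sFnP e α m ρ)[s.length + 1]'(by rw [length_sFnP]; omega)
          = ρ (α, e m, s.length + 1 - (e m).length) :=
        sFnP_getElem' e α m ρ (by omega) (by omega)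
      have h2 : (sFnP e α m ρ)[s.length + 1]'(by rw [length_sFnP]; omega) = x :=
        snoc_prefix_getElem hpre (by simp) _
      show ρ (α, e m, s.length + 1 - (e m).length) = x
      rw [← h1, h2]

end Null
section Null2
variable {κ : Type*} (ν : Measure (κ × List ℕ × ℕ → ℕ))

lemma nullZ [IsProbabilityMeasure ν]
    (hν : ∀ (F : Finset (κ × List ℕ × ℕ)) (g : κ × List ℕ × ℕ → ℕ),
      ν {ρ | ∀ c ∈ F, ρ c = g c} = ∏ c ∈ F, ((2 : ℝ≥0∞)⁻¹) ^ (g c + 1))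
    (e : ℕ → List ℕ) (α₀ : κ) (s : List ℕ) (I Bset : Finset ℕ) (K : ℕ) :
    ν (ZevS e α₀ s I Bset K) = 0 := by
  have hp := psum_lt_one Bset
  have hainj : Function.Injective (fun k : ℕ => ((α₀, s ++ [k], 0) : κ × List ℕ × ℕ)) := by
    intro k k' h
    simpa using h
  have hbound : ∀ n : ℕ, ν (ZevS e α₀ s I Bset K) ≤
      (∑ m ∈ Bset, ((2 : ℝ≥0∞)⁻¹) ^ (m + 1)) ^ n := by
    intro n
    set S : Finset ℕ := (Finset.range n).image
      (fun i => (JKF e s K ∪ I).sup id + 1 + i) with hS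
    have hcard : S.card = n := by
      rw [hS, Finset.card_image_of_injective _ (add_right_injective _), Finset.card_range]
    have hSout : ∀ k ∈ S, k ∉ JKF e s K ∧ k ∉ I := by
      intro k hk
      obtain ⟨i, _, rfl⟩ := Finset.mem_image.1 hk
      constructor
      · intro hmem
        have := Finset.le_sup (f := id) (s := JKF e s K ∪ I) (Finset.mem_union_left I hmem)
        simp only [id] at this
        omega
      · intro hmem
        have := Finset.le_sup (f := id) (s := JKF e s K ∪ I) (Finset.mem_union_right (JKF e s K) hmem)
        simp only [id] at this
        omega
    have hsub : ZevS e α₀ s I Bset K ⊆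
        {ρ : κ × List ℕ × ℕ → ℕ | (∀ c ∈ (∅ : Finset (κ × List ℕ × ℕ)), ρ c = 0) ∧
          ∀ k ∈ S, ρ ((α₀, s ++ [k], 0) : κ × List ℕ × ℕ) ∈ Bset} := by
      intro ρ hρ
      refine ⟨by simp, fun k hk => ?_⟩
      exact hρ k (hSout k hk).1 (hSout k hk).2
    calc ν (ZevS e α₀ s I Bset K)
        ≤ ν {ρ : κ × List ℕ × ℕ → ℕ | (∀ c ∈ (∅ : Finset (κ × List ℕ × ℕ)), ρ c = 0) ∧
          ∀ k ∈ S, ρ ((α₀, s ++ [k], 0) : κ × List ℕ × ℕ) ∈ Bset} := measure_mono hsub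
      _ = (∏ c ∈ (∅ : Finset (κ × List ℕ × ℕ)), ((2 : ℝ≥0∞)⁻¹) ^ ((0 : ℕ) + 1)) *
          (∑ m ∈ Bset, ((2 : ℝ≥0∞)⁻¹) ^ (m + 1)) ^ S.card :=
          key2 ν hν (fun k => (α₀, s ++ [k], 0)) Bset S ∅ (fun _ => 0)
            (hainj.injOn) (by simp)
      _ = (∑ m ∈ Bset, ((2 : ℝ≥0∞)⁻¹) ^ (m + 1)) ^ n := by rw [hcard]; simp
  have htend := ENNReal.tendsto_pow_atTop_nhds_zero_of_lt_one hp
  have hle : ν (ZevS e α₀ s I Bset K) ≤ 0 := ge_of_tendsto' htend hbound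
  exact le_antisymm hle zero_le

lemma Abound
    (hν : ∀ (F : Finset (κ × List ℕ × ℕ)) (g : κ × List ℕ × ℕ → ℕ),
      ν {ρ | ∀ c ∈ F, ρ c = g c} = ∏ c ∈ F, ((2 : ℝ≥0∞)⁻¹) ^ (g c + 1))
    {e : ℕ → List ℕ} {d : List ℕ → ℕ} (hd : ∀ t, e (d t) = t)
    {α₀ α : κ} (hα : α ≠ α₀) (s : List ℕ) (m : ℕ) :
    ν {ρ : κ × List ℕ × ℕ → ℕ | ∃ k, s ++ [k] <+: e m ∧
      sFnP e α m ρ <+: sFnP e α₀ (d (s ++ [k])) ρ} ≤ ((3 : ℝ≥0∞)⁻¹) ^ (m + 2) := by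
  by_cases hk : ∃ k, s ++ [k] <+: e m
  case neg =>
    have hempty : {ρ : κ × List ℕ × ℕ → ℕ | ∃ k, s ++ [k] <+: e m ∧
        sFnP e α m ρ <+: sFnP e α₀ (d (s ++ [k])) ρ} = ∅ := by
      ext ρ
      simp only [Set.mem_setOf_eq, Set.mem_empty_iff_false, iff_false, not_exists]
      intro k hpre
      exact absurd ⟨k, hpre.1⟩ hk
    rw [hempty, measure_empty]
    exact zero_le
  obtain ⟨k₀, hk₀⟩ := hk
  have hlsk : s.length + 1 ≤ (e m).length := by
    have := hk₀.length_le; simp at this; omega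
  have huniq : ∀ k, s ++ [k] <+: e m → k = k₀ := by
    intro k h
    have h1 : s ++ [k] <+: s ++ [k₀] := List.prefix_of_prefix_length_le h hk₀ (by simp)
    have h2 : s ++ [k] = s ++ [k₀] := h1.eq_of_length_le (by simp)
    simpa using h2
  by_cases hlen : (e m).length + (m + 2) ≤ (s ++ [k₀]).length + (d (s ++ [k₀]) + 2)
  · have hsub : {ρ : κ × List ℕ × ℕ → ℕ | ∃ k, s ++ [k] <+: e m ∧
        sFnP e α m ρ <+: sFnP e α₀ (d (s ++ [k])) ρ} ⊆
        {ρ : κ × List ℕ × ℕ → ℕ | (∀ c ∈ (∅ : Finset (κ × List ℕ × ℕ)), ρ c = 0) ∧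
          ∀ i < m + 2, ρ ((α, e m, i) : κ × List ℕ × ℕ)
            = ρ ((α₀, s ++ [k₀], (e m).length - (s.length + 1) + i) : κ × List ℕ × ℕ)} := by
      rintro ρ ⟨k, hpre, hq⟩
      have hkk : k = k₀ := huniq k hpre
      subst hkk
      refine ⟨by simp, fun i hi => ?_⟩
      have hql : (sFnP e α m ρ).length = (e m).length + (m + 2) := length_sFnP _ _ _ _
      have hlen' : (e m).length + (m + 2) ≤ s.length + 1 + (d (s ++ [k]) + 2) := by
        have h0 : (s ++ [k]).length = s.length + 1 := by simp
        omega
      have hrl : (sFnP e α₀ (d (s ++ [k])) ρ).length = s.length + 1 + (d (s ++ [k]) + 2) := by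
        rw [length_sFnP, hd]
        simp
      have h1 : (sFnP e α m ρ)[(e m).length + i]'(by omega)
          = ρ (α, e m, i) := by
        have := sFnP_getElem' e α m ρ (i := (e m).length + i) (Nat.le_add_right _ _) (by omega)
        simpa using this
      have h2 : (sFnP e α₀ (d (s ++ [k])) ρ)[(e m).length + i]'(by omega)
          = ρ (α₀, s ++ [k], (e m).length - (s.length + 1) + i) := by
        have h3 := sFnP_getElem' e α₀ (d (s ++ [k])) ρ (i := (e m).length + i)
          (by rw [hd]; simp; omega) (by rw [hd]; simp; omega)
        simp only [hd] at h3
        rw [h3]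
        have harith : (e m).length + i - (s ++ [k]).length
            = (e m).length - (s.length + 1) + i := by
          simp only [List.length_append, List.length_singleton]
          omega
        rw [harith]
      have h4 := List.IsPrefix.getElem hq (i := (e m).length + i) (by omega)
      rw [← h1, ← h2]
      exact h4
    calc ν {ρ : κ × List ℕ × ℕ → ℕ | ∃ k, s ++ [k] <+: e m ∧
        sFnP e α m ρ <+: sFnP e α₀ (d (s ++ [k])) ρ}
        ≤ ν {ρ : κ × List ℕ × ℕ → ℕ | (∀ c ∈ (∅ : Finset (κ × List ℕ × ℕ)), ρ c = 0) ∧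
          ∀ i < m + 2, ρ ((α, e m, i) : κ × List ℕ × ℕ)
            = ρ ((α₀, s ++ [k₀], (e m).length - (s.length + 1) + i) : κ × List ℕ × ℕ)} :=
          measure_mono hsub
      _ = (∏ c ∈ (∅ : Finset (κ × List ℕ × ℕ)), ((2 : ℝ≥0∞)⁻¹) ^ ((0:ℕ) + 1)) *
          ((3 : ℝ≥0∞)⁻¹) ^ (m + 2) := by
          refine key3 ν hν (fun i => (α, e m, i)) (fun i => (α₀, s ++ [k₀], (e m).length - (s.length + 1) + i))
            (m + 2) ∅ (fun _ => 0) (by simp) (by simp) ?_ ?_ ?_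
          · intro i _ i' _ h
            exact hα (congrArg Prod.fst h)
          · intro i _ i' _ hne h
            simp only [Prod.mk.injEq] at h
            exact hne h.2.2
          · intro i _ i' _ hne h
            simp only [Prod.mk.injEq] at h
            omega
      _ = ((3 : ℝ≥0∞)⁻¹) ^ (m + 2) := by simp
  · have hempty : {ρ : κ × List ℕ × ℕ → ℕ | ∃ k, s ++ [k] <+: e m ∧
        sFnP e α m ρ <+: sFnP e α₀ (d (s ++ [k])) ρ} = ∅ := by
      ext ρ
      simp only [Set.mem_setOf_eq, Set.mem_empty_iff_false, iff_false, not_exists]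
      rintro k ⟨hpre, hq⟩
      have hkk : k = k₀ := huniq k hpre
      subst hkk
      have := hq.length_le
      rw [length_sFnP, length_sFnP, hd] at this
      omega
    rw [hempty, measure_empty]
    exact zero_le

end Null2
section Null3
variable {κ : Type*} (ν : Measure (κ × List ℕ × ℕ → ℕ))

lemma tsum_tail_third (K : ℕ) :
    ∑' j : ℕ, ((3 : ℝ≥0∞)⁻¹) ^ (K + j + 2) ≤ ((3 : ℝ≥0∞)⁻¹) ^ K := by
  have h1 : ∀ j : ℕ, ((3 : ℝ≥0∞)⁻¹) ^ (K + j + 2)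
      = (((3 : ℝ≥0∞)⁻¹) ^ (K + 2)) * ((3 : ℝ≥0∞)⁻¹) ^ j := by
    intro j
    rw [← pow_add]
    ring_nf
  rw [tsum_congr h1, ENNReal.tsum_mul_left, ENNReal.tsum_geometric]
  have hsub : (1 : ℝ≥0∞) - (3 : ℝ≥0∞)⁻¹ = 2 * (3 : ℝ≥0∞)⁻¹ := by
    refine ENNReal.sub_eq_of_eq_add (by norm_num) ?_
    have h33 : (3 : ℝ≥0∞) * (3 : ℝ≥0∞)⁻¹ = 1 := ENNReal.mul_inv_cancel (by norm_num) (by norm_num)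
    calc (1 : ℝ≥0∞) = 3 * (3 : ℝ≥0∞)⁻¹ := h33.symm
      _ = 2 * (3 : ℝ≥0∞)⁻¹ + (3 : ℝ≥0∞)⁻¹ := by
          rw [show (3 : ℝ≥0∞) = 2 + 1 by norm_num, add_mul, one_mul]
  rw [hsub, ENNReal.mul_inv (Or.inl (by norm_num)) (Or.inl (by norm_num)), inv_inv]
  calc ((3 : ℝ≥0∞)⁻¹) ^ (K + 2) * ((2 : ℝ≥0∞)⁻¹ * 3)
      = ((3 : ℝ≥0∞)⁻¹) ^ K * (((3 : ℝ≥0∞)⁻¹ * 3) * ((3 : ℝ≥0∞)⁻¹ * (2 : ℝ≥0∞)⁻¹)) := by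
        rw [pow_add]
        ring
    _ = ((3 : ℝ≥0∞)⁻¹) ^ K * ((3 : ℝ≥0∞)⁻¹ * (2 : ℝ≥0∞)⁻¹) := by
        rw [ENNReal.inv_mul_cancel (by norm_num) (by norm_num), one_mul]
    _ ≤ ((3 : ℝ≥0∞)⁻¹) ^ K * 1 := by
        refine mul_le_mul_right ?_ _
        calc (3 : ℝ≥0∞)⁻¹ * (2 : ℝ≥0∞)⁻¹ ≤ 1 * 1 :=
              mul_le_mul' (ENNReal.inv_le_one.2 (by norm_num)) (ENNReal.inv_le_one.2 (by norm_num))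
          _ = 1 := one_mul 1
    _ = ((3 : ℝ≥0∞)⁻¹) ^ K := mul_one _

lemma nullN1 [IsProbabilityMeasure ν]
    (hν : ∀ (F : Finset (κ × List ℕ × ℕ)) (g : κ × List ℕ × ℕ → ℕ),
      ν {ρ | ∀ c ∈ F, ρ c = g c} = ∏ c ∈ F, ((2 : ℝ≥0∞)⁻¹) ^ (g c + 1))
    {e : ℕ → List ℕ} {d : List ℕ → ℕ} (hd : ∀ t, e (d t) = t)
    {α₀ : κ} (s : List ℕ) (L : Finset κ) (hL : ∀ α ∈ L, α ≠ α₀) :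
    ν (N1S e d α₀ s L) = 0 := by
  have hbound : ∀ K : ℕ, ν (N1S e d α₀ s L) ≤ (L.card : ℝ≥0∞) * ((3 : ℝ≥0∞)⁻¹) ^ K := by
    intro K
    have hsub : N1S e d α₀ s L ⊆ ⋃ (q : {α // α ∈ L} × ℕ),
        {ρ : κ × List ℕ × ℕ → ℕ | ∃ k, s ++ [k] <+: e (K + q.2) ∧
          sFnP e (q.1 : κ) (K + q.2) ρ <+: sFnP e α₀ (d (s ++ [k])) ρ} := by
      intro ρ hρ
      obtain ⟨α, hα, m, hKm, k, h1, h2⟩ := hρ K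
      refine Set.mem_iUnion.2 ⟨(⟨α, hα⟩, m - K), ⟨k, ?_, ?_⟩⟩
      · have : K + (m - K) = m := by omega
        rwa [this]
      · have : K + (m - K) = m := by omega
        rwa [this]
    calc ν (N1S e d α₀ s L)
        ≤ ∑' q : {α // α ∈ L} × ℕ, ν {ρ : κ × List ℕ × ℕ → ℕ | ∃ k, s ++ [k] <+: e (K + q.2) ∧
            sFnP e (q.1 : κ) (K + q.2) ρ <+: sFnP e α₀ (d (s ++ [k])) ρ} :=
          (measure_mono hsub).trans (measure_iUnion_le _)
      _ ≤ ∑' q : {α // α ∈ L} × ℕ, ((3 : ℝ≥0∞)⁻¹) ^ (K + q.2 + 2) :=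
          ENNReal.tsum_le_tsum (fun q => Abound ν hν hd (hL q.1 q.1.2) s (K + q.2))
      _ = ∑' (α : {α // α ∈ L}), ∑' j : ℕ, ((3 : ℝ≥0∞)⁻¹) ^ (K + j + 2) :=
          ENNReal.tsum_prod (f := fun _ j => ((3 : ℝ≥0∞)⁻¹) ^ (K + j + 2))
      _ ≤ ∑' (_ : {α // α ∈ L}), ((3 : ℝ≥0∞)⁻¹) ^ K :=
          ENNReal.tsum_le_tsum (fun α => tsum_tail_third K)
      _ = (L.card : ℝ≥0∞) * ((3 : ℝ≥0∞)⁻¹) ^ K := by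
          rw [tsum_fintype]
          rw [Finset.sum_const, nsmul_eq_mul]
          congr 1
          simp [Fintype.card_coe]
  have htend : Filter.Tendsto (fun K : ℕ => (L.card : ℝ≥0∞) * ((3 : ℝ≥0∞)⁻¹) ^ K)
      Filter.atTop (nhds 0) := by
    have h3 : ((3 : ℝ≥0∞)⁻¹) < 1 := ENNReal.inv_lt_one.2 (by norm_num)
    have := ENNReal.Tendsto.const_mul (ENNReal.tendsto_pow_atTop_nhds_zero_of_lt_one h3)
      (Or.inr (ENNReal.natCast_ne_top L.card))
    simpa using this
  have hle : ν (N1S e d α₀ s L) ≤ 0 := ge_of_tendsto' htend hbound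
  exact le_antisymm hle zero_le

lemma aeGood [IsProbabilityMeasure ν]
    (hν : ∀ (F : Finset (κ × List ℕ × ℕ)) (g : κ × List ℕ × ℕ → ℕ),
      ν {ρ | ∀ c ∈ F, ρ c = g c} = ∏ c ∈ F, ((2 : ℝ≥0∞)⁻¹) ^ (g c + 1))
    {e : ℕ → List ℕ} {d : List ℕ → ℕ} (hd : ∀ t, e (d t) = t)
    (hinj : Function.Injective e) (α₀ : κ) (s : List ℕ) (T : Finset (List ℕ))
    (L : Finset κ) (hL : ∀ α ∈ L, α ≠ α₀) :
    ∀ᵐ ρ ∂ν, GoodP e d α₀ s T L ρ := by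
  rw [MeasureTheory.ae_iff]
  have hcover : {ρ : κ × List ℕ × ℕ → ℕ | ¬ GoodP e d α₀ s T L ρ} ⊆
      N1S e d α₀ s L ∪ ⋃ (I : Finset ℕ) (Bset : Finset ℕ) (K : ℕ), ZevS e α₀ s I Bset K := by
    intro ρ hρ
    simp only [Set.mem_setOf_eq] at hρ
    by_cases hN : ρ ∈ N1S e d α₀ s L
    · exact Or.inl hN
    right
    simp only [N1S, Set.mem_setOf_eq, not_forall] at hN
    obtain ⟨K, hK⟩ := hN
    push_neg at hK
    refine Set.mem_iUnion.2 ⟨InvK e d s T L ρ, Set.mem_iUnion.2 ⟨BadLF e d s T L ρ,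
      Set.mem_iUnion.2 ⟨K, ?_⟩⟩⟩
    intro k hkJ hkI
    have hP3 : ∀ α ∈ L, ∀ m, s ++ [k] <+: e m →
        ¬ (sFnP e α m ρ <+: sFnP e α₀ (d (s ++ [k])) ρ) := by
      intro α hα m hpre hq
      by_cases hKm : K ≤ m
      · exact hK α hα m hKm k hpre hq
      · exact hkJ (Finset.mem_image.2 ⟨m, Finset.mem_range.2 (by omega), prefix_getD hpre⟩)
    have hP1 : s ++ [k] ∉ T ∧ ∀ α ∈ L, ∀ m, sFnP e α m ρ ≠ s ++ [k] := by
      constructor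
      · intro hT
        exact hkI (mem_InvK hd hinj (Or.inl hT))
      · intro α hα m hm
        exact hkI (mem_InvK hd hinj (Or.inr ⟨α, hα, m, hm⟩))
    by_cases hc : ∃ t' ∈ T, s ++ [k] ++ [ρ (α₀, s ++ [k], 0)] <+: t'
    · exact mem_BadLF hd hinj (Or.inl hc)
    · have hc2 : ∃ α ∈ L, ∃ m, e m <+: s ∧
          s ++ [k] ++ [ρ (α₀, s ++ [k], 0)] <+: sFnP e α m ρ := by
        by_contra hc2
        push_neg at hc2
        push_neg at hc
        exact hρ ⟨k, hP1, ⟨hc, hc2⟩, hP3⟩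
      exact mem_BadLF hd hinj (Or.inr hc2)
  refine measure_mono_null hcover ?_
  refine measure_union_null (nullN1 ν hν hd s L hL) ?_
  refine measure_iUnion_null fun I => measure_iUnion_null fun Bset =>
    measure_iUnion_null fun K => nullZ ν hν e α₀ s I Bset K

end Null3

theorem stmt5 {κ : Type*}
    (e : ℕ → List ℕ) (hbij : Function.Bijective e)
    (hord : ∀ n ℓ, e n <+: e ℓ → e n ≠ e ℓ → n < ℓ)
    (hsuc : ∀ n ℓ t k, e n = t ++ [k] → e ℓ = t ++ [k + 1] → n < ℓ)
    (ν : Measure (κ × List ℕ × ℕ → ℕ)) [IsProbabilityMeasure ν]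
    (hν : ∀ (F : Finset (κ × List ℕ × ℕ)) (g : κ × List ℕ × ℕ → ℕ),
      ν {ρ | ∀ c ∈ F, ρ c = g c} = ∏ c ∈ F, ((2 : ℝ≥0∞)⁻¹) ^ (g c + 1))
    (B : Set κ) (hB : B.Countable) (α₀ : κ) (hα₀ : α₀ ∉ B) :
    ∀ᵐ ρ ∂ν,
      @Dense _
        (TopologicalSpace.generateFrom (subbasis0 ∪ ((fun α => UsetP e α ρ) '' B)))
        (WsetP e α₀ ρ) := by
  classical
  set d : List ℕ → ℕ := Function.surjInv hbij.2 with hddef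
  have hd : ∀ t, e (d t) = t := fun t => Function.surjInv_eq hbij.2 t
  have hinj : Function.Injective e := hbij.1
  have hLcount : {L : Finset κ | ↑L ⊆ B}.Countable := by
    have h1 : {t : Set κ | t.Finite ∧ t ⊆ B}.Countable :=
      Set.countable_setOf_finite_subset hB
    have h2 : {L : Finset κ | ↑L ⊆ B} ⊆
        (fun L : Finset κ => (↑L : Set κ)) ⁻¹' {t : Set κ | t.Finite ∧ t ⊆ B} := by
      intro L hL
      exact ⟨L.finite_toSet, hL⟩
    exact ((h1.preimage Finset.coe_injective).mono h2)
  have hae : ∀ᵐ ρ ∂ν, ∀ (s : List ℕ) (T : Finset (List ℕ)) (L : Finset κ),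
      ↑L ⊆ B → GoodP e d α₀ s T L ρ := by
    rw [MeasureTheory.ae_all_iff]
    intro s
    rw [MeasureTheory.ae_all_iff]
    intro T
    refine (MeasureTheory.ae_ball_iff (μ := ν) hLcount
      (p := fun ρ (L : Finset κ) (_ : L ∈ {L : Finset κ | ↑L ⊆ B}) =>
        GoodP e d α₀ s T L ρ)).2 ?_
    intro L hLB
    have hL : ∀ α ∈ L, α ≠ α₀ := by
      intro α hα h
      exact hα₀ (h ▸ hLB hα)
    exact aeGood ν hν hd hinj α₀ s T L hL
  filter_upwards [hae] with ρ hρ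
  have hbasis := @TopologicalSpace.isTopologicalBasis_of_subbasis (List ℕ)
    (TopologicalSpace.generateFrom (subbasis0 ∪ ((fun α => UsetP e α ρ) '' B)))
    (subbasis0 ∪ ((fun α => UsetP e α ρ) '' B)) rfl
  refine (@TopologicalSpace.IsTopologicalBasis.dense_iff (List ℕ)
    (TopologicalSpace.generateFrom (subbasis0 ∪ ((fun α => UsetP e α ρ) '' B)))
    _ hbasis (WsetP e α₀ ρ)).2 ?_
  rintro o ho hone
  obtain ⟨F, ⟨hFfin, hFsub⟩, rfl⟩ := ho
  obtain ⟨x, hx⟩ := hone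
  -- the finset of complemented cones in F
  have hconeinj : Function.Injective (fun t : List ℕ => (cone t)ᶜ) := by
    intro t t' h
    simp only at h
    have h2 : cone t = cone t' := compl_injective h
    have p1 : t <+: t' := by
      have h3 : t' ∈ cone t' := List.prefix_rfl
      rw [← h2] at h3
      exact h3
    have p2 : t' <+: t := by
      have h3 : t ∈ cone t := List.prefix_rfl
      rw [h2] at h3
      exact h3
    exact p1.eq_of_length_le p2.length_le
  have hTfin : {t : List ℕ | (cone t)ᶜ ∈ F}.Finite := by
    have : {t : List ℕ | (cone t)ᶜ ∈ F} = (fun t : List ℕ => (cone t)ᶜ) ⁻¹' F := rfl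
    rw [this]
    exact hFfin.preimage hconeinj.injOn
  set T : Finset (List ℕ) := hTfin.toFinset with hTdef
  -- the finset of indices of U-sets in F
  have hFU : {A : Set (List ℕ) | A ∈ F ∧ A ∈ (fun α => UsetP e α ρ) '' B}.Finite :=
    hFfin.subset (fun A hA => hA.1)
  set f : Set (List ℕ) → κ := fun A =>
    if h : ∃ α ∈ B, UsetP e α ρ = A then h.choose else α₀ with hfdef
  set L : Finset κ := hFU.toFinset.image f with hLdef
  have hfspec : ∀ A ∈ hFU.toFinset, f A ∈ B ∧ UsetP e (f A) ρ = A := by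
    intro A hA
    have hA' := hFU.mem_toFinset.1 hA
    obtain ⟨α', hα', heq⟩ := hA'.2
    have hex : ∃ α ∈ B, UsetP e α ρ = A := ⟨α', hα', heq⟩
    rw [hfdef]
    simp only [dif_pos hex]
    exact ⟨hex.choose_spec.1, hex.choose_spec.2⟩
  have hLB : ↑L ⊆ B := by
    intro α hα
    obtain ⟨A, hA, rfl⟩ := Finset.mem_image.1 hα
    exact (hfspec A hA).1
  -- premises of `core`
  have hsub0 : ∀ t' ∈ T, ¬ t' <+: x := by
    intro t' ht' hpre
    have hmem : (cone t')ᶜ ∈ F := hTfin.mem_toFinset.1 ht'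
    exact (hx _ hmem) hpre
  have hsub1 : ∀ α ∈ L, x ∈ UsetP e α ρ := by
    intro α hα
    obtain ⟨A, hA, rfl⟩ := Finset.mem_image.1 hα
    have := (hfspec A hA).2
    rw [this]
    exact hx A (hFU.mem_toFinset.1 hA).1
  obtain ⟨s', hxs', hW, hT', hU'⟩ := core hd (hρ x T L hLB) hsub0 hsub1
  refine ⟨s', Set.mem_sInter.2 ?_, hW⟩
  intro A hA
  rcases hFsub hA with hA0 | hAim
  · rcases hA0 with ⟨t, rfl⟩ | ⟨t, rfl⟩
    · exact (hx _ hA).trans hxs'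
    · have ht : t ∈ T := hTfin.mem_toFinset.2 hA
      exact hT' t ht
  · have hAU : A ∈ hFU.toFinset := hFU.mem_toFinset.2 ⟨hA, hAim⟩
    have hfA : f A ∈ L := Finset.mem_image_of_mem f hAU
    have heq : UsetP e (f A) ρ = A := (hfspec A hAU).2
    rw [← heq]
    exact hU' (f A) hfA
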